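/- arXiv:2505.18433 — 6 statements merged into one kernel-verified Lean document; each statement's English description precedes it below -/
import Mathlib

section
/- (Policy Gradient Theorem, discounted finite MDP) In a finite discounted MDP with a parameterized policy whose entries π_θ(a|s) are continuously differentiable in θ ∈ ℝⁿ, the objective J(θ) is differentiable in θ and its gradient satisfies ∇_θ J(θ) = Σ_{s∈S} η_θ(s) Σ_{a∈A} ∇_θ π_θ(a|s) · Q_θ(s,a), where η_θ(s) := Σ_{t=0}^∞ γ^t (P_θ^t)(s₀,s) is the discounted visitation measure of the policy-induced state chain P_θ. -/
open scoped Matrix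
attribute [local instance] Matrix.linftyOpNormedRing Matrix.linftyOpNormedAlgebra

/-- Policy Gradient Theorem, discounted finite MDP:
In a finite discounted MDP with a parameterized policy `π_θ(a|s)` that is
continuously differentiable in `θ ∈ ℝⁿ`, the objective `J` is differentiable and
`∇_θ J(θ) = Σ_s η_θ(s) Σ_a ∇_θ π_θ(a|s) · Q_θ(s,a)`,
where `η_θ(s) = Σ_t γ^t (P_θ^t)(s₀,s)` is the discounted visitation measure of the
policy-induced state chain `P_θ`. -/
theorem policy_gradient_theorem
    {S A : Type*} [Fintype S] [DecidableEq S] [Nonempty S] [Fintype A] [Nonempty A]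
    {n : ℕ}
    (p : S → A → S → ℝ) (hp0 : ∀ s a s', 0 ≤ p s a s') (hp1 : ∀ s a, ∑ s', p s a s' = 1)
    (r : S → A → ℝ) (γ : ℝ) (hγ : γ ∈ Set.Ioo (0 : ℝ) 1) (s₀ : S)
    (π : (Fin n → ℝ) → S → A → ℝ)
    (hπ0 : ∀ θ s a, 0 ≤ π θ s a) (hπ1 : ∀ θ s, ∑ a, π θ s a = 1)
    (hπC : ∀ s a, ContDiff ℝ 1 (fun θ => π θ s a))
    (Pmat : (Fin n → ℝ) → Matrix S S ℝ)
    (hPmat : ∀ θ s s', Pmat θ s s' = ∑ a, π θ s a * p s a s')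
    (Q : (Fin n → ℝ) → S → A → ℝ)
    (hQ : ∀ θ s a, Q θ s a = r s a + γ * ∑ s', p s a s' * ∑ a', π θ s' a' * Q θ s' a')
    (J : (Fin n → ℝ) → ℝ)
    (hJ : ∀ θ, J θ = ∑' t : ℕ, γ ^ t * ∑ s, ((Pmat θ) ^ t) s₀ s * ∑ a, π θ s a * r s a)
    (η : (Fin n → ℝ) → S → ℝ)
    (hη : ∀ θ s, η θ s = ∑' t : ℕ, γ ^ t * ((Pmat θ) ^ t) s₀ s)
    (θ : Fin n → ℝ) :
    HasFDerivAt J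
      (∑ s, η θ s • ∑ a, Q θ s a • fderiv ℝ (fun θ' => π θ' s a) θ) θ := by
  classical
  obtain ⟨hγ0, hγ1⟩ := hγ
  -- basic facts about Pmat
  have hPnn : ∀ θ' (s s' : S), 0 ≤ Pmat θ' s s' := by
    intro θ' s s'; rw [hPmat]
    exact Finset.sum_nonneg fun a _ => mul_nonneg (hπ0 _ _ _) (hp0 _ _ _)
  have hProw : ∀ θ' (s : S), ∑ s', Pmat θ' s s' = 1 := by
    intro θ' s
    simp only [hPmat]
    rw [Finset.sum_comm]
    calc (∑ a, ∑ s', π θ' s a * p s a s') = ∑ a, π θ' s a * ∑ s', p s a s' := by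
          simp [Finset.mul_sum]
      _ = ∑ a, π θ' s a := by simp [hp1]
      _ = 1 := hπ1 θ' s
  -- norm bound on γ • Pmat θ'
  have hBnorm : ∀ θ', ‖γ • Pmat θ'‖ < 1 := by
    intro θ'
    rw [Matrix.linfty_opNorm_def]
    have hrow : ∀ s : S, (∑ s', ‖(γ • Pmat θ') s s'‖₊) = ‖γ‖₊ := by
      intro s
      apply NNReal.coe_injective
      push_cast
      calc (∑ s', (‖(γ • Pmat θ') s s'‖₊ : ℝ))
          = ∑ s', γ * Pmat θ' s s' := by
            refine Finset.sum_congr rfl fun s' _ => ?_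
            rw [coe_nnnorm, Matrix.smul_apply, smul_eq_mul, Real.norm_eq_abs,
              abs_of_nonneg (mul_nonneg hγ0.le (hPnn _ _ _))]
        _ = γ := by rw [← Finset.mul_sum, hProw, mul_one]
        _ = (‖γ‖₊ : ℝ) := by
            rw [coe_nnnorm, Real.norm_eq_abs, abs_of_nonneg hγ0.le]
    rw [Finset.sup_congr rfl (fun s _ => hrow s), Finset.sup_const Finset.univ_nonempty]
    have : (‖γ‖₊ : ℝ) = γ := by rw [coe_nnnorm, Real.norm_eq_abs, abs_of_nonneg hγ0.le]
    rw [this]; exact hγ1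
  -- the resolvent g θ' = (1 - γ P)⁻¹
  set g : (Fin n → ℝ) → Matrix S S ℝ := fun θ' => Ring.inverse (1 - γ • Pmat θ') with hg
  have h_geom : ∀ θ', HasSum (fun t : ℕ => (γ • Pmat θ') ^ t) (g θ') := fun θ' =>
    hasSum_geom_series_inverse _ (hBnorm θ')
  have hunit : ∀ θ', IsUnit ((1 : Matrix S S ℝ) - γ • Pmat θ') := fun θ' =>
    isUnit_one_sub_of_norm_lt_one (hBnorm θ')
  have hgM : ∀ θ', g θ' * ((1 : Matrix S S ℝ) - γ • Pmat θ') = 1 := fun θ' =>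
    Ring.inverse_mul_cancel _ (hunit θ')
  -- value of the reward vector
  set v : (Fin n → ℝ) → S → ℝ := fun θ' s => ∑ a, π θ' s a * r s a with hv
  -- entry evaluation CLM
  let Ev : S → S → (Matrix S S ℝ →L[ℝ] ℝ) := fun i j =>
    LinearMap.toContinuousLinearMap
      { toFun := fun M => M i j
        map_add' := fun M N => rfl
        map_smul' := fun c M => rfl }
  have hEv : ∀ i j (M : Matrix S S ℝ), Ev i j M = M i j := fun _ _ _ => rfl
  -- J in resolvent form
  have hJg : ∀ θ', J θ' = ∑ s, g θ' s₀ s * v θ' s := by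
    intro θ'
    let L0 : Matrix S S ℝ →ₗ[ℝ] ℝ :=
      { toFun := fun M => ∑ s, M s₀ s * v θ' s
        map_add' := by intro M N; simp [Matrix.add_apply, add_mul, Finset.sum_add_distrib]
        map_smul' := by intro c M; simp [Matrix.smul_apply, smul_eq_mul, Finset.mul_sum, mul_assoc] }
    let L : Matrix S S ℝ →L[ℝ] ℝ := LinearMap.toContinuousLinearMap L0
    have hL : ∀ M : Matrix S S ℝ, L M = ∑ s, M s₀ s * v θ' s := fun _ => rfl
    have h1 : ∀ t : ℕ, γ ^ t * ∑ s, ((Pmat θ') ^ t) s₀ s * v θ' s = L ((γ • Pmat θ') ^ t) := by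
      intro t
      rw [hL, smul_pow, Finset.mul_sum]
      refine Finset.sum_congr rfl fun s _ => ?_
      rw [Matrix.smul_apply, smul_eq_mul, mul_assoc]
    rw [hJ, tsum_congr h1, ← ContinuousLinearMap.map_tsum _ (h_geom θ').summable,
      (h_geom θ').tsum_eq, hL]
  -- η in resolvent form
  have hηg : ∀ s, η θ s = g θ s₀ s := by
    intro s
    rw [hη]
    have h1 : ∀ t : ℕ, γ ^ t * ((Pmat θ) ^ t) s₀ s = Ev s₀ s ((γ • Pmat θ) ^ t) := by
      intro t
      rw [hEv, smul_pow, Matrix.smul_apply, smul_eq_mul]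
    rw [tsum_congr h1, ← ContinuousLinearMap.map_tsum _ (h_geom θ).summable,
      (h_geom θ).tsum_eq, hEv]
  -- the value function Vπ
  set Vπ : S → ℝ := fun s => ∑ a, π θ s a * Q θ s a with hVπdef
  have hQV : ∀ s a, Q θ s a = r s a + γ * ∑ s', p s a s' * Vπ s' := fun s a => hQ θ s a
  have hMV : ∀ s, Vπ s - γ * ∑ s', Pmat θ s s' * Vπ s' = v θ s := by
    intro s
    have key : ∑ a, π θ s a * (γ * ∑ s', p s a s' * Vπ s')
        = γ * ∑ s', Pmat θ s s' * Vπ s' := by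
      calc ∑ a, π θ s a * (γ * ∑ s', p s a s' * Vπ s')
          = γ * ∑ a, π θ s a * ∑ s', p s a s' * Vπ s' := by
            rw [Finset.mul_sum]; exact Finset.sum_congr rfl fun a _ => by ring
        _ = γ * ∑ s', (∑ a, π θ s a * p s a s') * Vπ s' := by
            congr 1
            calc ∑ a, π θ s a * ∑ s', p s a s' * Vπ s'
                = ∑ a, ∑ s', π θ s a * p s a s' * Vπ s' := by
                  refine Finset.sum_congr rfl fun a _ => ?_
                  rw [Finset.mul_sum]
                  exact Finset.sum_congr rfl fun s' _ => by ring
              _ = ∑ s', ∑ a, π θ s a * p s a s' * Vπ s' := Finset.sum_comm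
              _ = ∑ s', (∑ a, π θ s a * p s a s') * Vπ s' := by
                  refine Finset.sum_congr rfl fun s' _ => ?_
                  rw [Finset.sum_mul]
        _ = γ * ∑ s', Pmat θ s s' * Vπ s' := by
            congr 1; exact Finset.sum_congr rfl fun s' _ => by rw [hPmat]
    have expand : Vπ s = v θ s + γ * ∑ s', Pmat θ s s' * Vπ s' := by
      calc Vπ s = ∑ a, π θ s a * (r s a + γ * ∑ s', p s a s' * Vπ s') := by
            refine Finset.sum_congr rfl fun a _ => ?_
            rw [← hQV]
        _ = (∑ a, π θ s a * r s a) + ∑ a, π θ s a * (γ * ∑ s', p s a s' * Vπ s') := by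
            rw [← Finset.sum_add_distrib]
            exact Finset.sum_congr rfl fun a _ => by ring
        _ = v θ s + γ * ∑ s', Pmat θ s s' * Vπ s' := by rw [key]
    rw [expand]; ring
  -- resolvent applied to rewards gives Vπ
  have hgv : ∀ s, ∑ s', g θ s s' * v θ s' = Vπ s := by
    have hmv : ((1 : Matrix S S ℝ) - γ • Pmat θ) *ᵥ Vπ = v θ := by
      funext s
      rw [Matrix.sub_mulVec, Matrix.one_mulVec, Matrix.smul_mulVec]
      show Vπ s - (γ • (Pmat θ *ᵥ Vπ)) s = v θ s
      rw [Pi.smul_apply, smul_eq_mul]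
      exact hMV s
    have h2 : g θ *ᵥ (((1 : Matrix S S ℝ) - γ • Pmat θ) *ᵥ Vπ) = Vπ := by
      rw [Matrix.mulVec_mulVec, hgM, Matrix.one_mulVec]
    rw [hmv] at h2
    intro s
    exact congrFun h2 s
  have hUv : g θ *ᵥ v θ = Vπ := funext fun s => hgv s
  -- differentiability of the policy entries
  have hπdiff : ∀ s a, HasFDerivAt (fun θ' => π θ' s a) (fderiv ℝ (fun θ' => π θ' s a) θ) θ :=
    fun s a => (((hπC s a).differentiable one_ne_zero) θ).hasFDerivAt
  -- decomposition matrices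
  set E : S → A → Matrix S S ℝ :=
    fun s a => Matrix.of fun s₁ s' => if s₁ = s then p s a s' else 0 with hEdef
  set DP : (Fin n → ℝ) →L[ℝ] Matrix S S ℝ :=
    ∑ s, ∑ a, (fderiv ℝ (fun θ' => π θ' s a) θ).smulRight (E s a) with hDPdef
  have hPdiff : HasFDerivAt Pmat DP θ := by
    have hdecomp : Pmat = fun θ' => ∑ s, ∑ a, π θ' s a • E s a := by
      funext θ'
      ext s₁ s'
      rw [hPmat]
      symm
      calc (∑ s, ∑ a, π θ' s a • E s a) s₁ s'
          = ∑ s, ∑ a, (if s₁ = s then π θ' s a * p s a s' else 0) := by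
            simp only [Matrix.sum_apply, Matrix.smul_apply, hEdef, Matrix.of_apply,
              smul_eq_mul, mul_ite, mul_zero]
        _ = ∑ s, (if s₁ = s then ∑ a, π θ' s a * p s a s' else 0) := by
            refine Finset.sum_congr rfl fun s _ => ?_
            split_ifs <;> simp
        _ = ∑ a, π θ' s₁ a * p s₁ a s' := by
            rw [Finset.sum_ite_eq, if_pos (Finset.mem_univ s₁)]
    rw [hdecomp, hDPdef]
    exact HasFDerivAt.fun_sum fun s _ => HasFDerivAt.fun_sum fun a _ =>
      (hπdiff s a).smul_const (E s a)
  set DM : (Fin n → ℝ) →L[ℝ] Matrix S S ℝ := -(γ • DP) with hDMdef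
  have hMdiff : HasFDerivAt (fun θ' => (1 : Matrix S S ℝ) - γ • Pmat θ') DM θ := by
    rw [hDMdef]
    exact (hPdiff.const_smul γ).const_sub 1
  have hgθunit : g θ = ((Units.oneSub (γ • Pmat θ) (hBnorm θ))⁻¹ : (Matrix S S ℝ)ˣ) := by
    have h1 := Ring.inverse_unit (Units.oneSub (γ • Pmat θ) (hBnorm θ))
    exact h1
  set Dg : (Fin n → ℝ) →L[ℝ] Matrix S S ℝ :=
    (-((ContinuousLinearMap.mulLeftRight ℝ (Matrix S S ℝ)) (g θ) (g θ))).comp DM with hDgdef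
  have hgdiff : HasFDerivAt g Dg θ := by
    have h1 := hasFDerivAt_ringInverse (𝕜 := ℝ) (Units.oneSub (γ • Pmat θ) (hBnorm θ))
    rw [← hgθunit] at h1
    have h2 := h1.comp θ hMdiff
    rw [hDgdef]
    exact h2
  -- derivative of J
  set dπ : S → A → ((Fin n → ℝ) →L[ℝ] ℝ) := fun s a => fderiv ℝ (fun θ' => π θ' s a) θ with hdπdef
  set D : (Fin n → ℝ) →L[ℝ] ℝ :=
    ∑ s, ((g θ s₀ s) • (∑ a, r s a • dπ s a) + (v θ s) • ((Ev s₀ s).comp Dg)) with hDdef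
  have hJdiff : HasFDerivAt J D θ := by
    have hfun : J = fun θ' => ∑ s, g θ' s₀ s * v θ' s := funext hJg
    rw [hfun, hDdef]
    refine HasFDerivAt.fun_sum fun s _ => ?_
    have h1 : HasFDerivAt (fun θ' => g θ' s₀ s) ((Ev s₀ s).comp Dg) θ :=
      (Ev s₀ s).hasFDerivAt.comp θ hgdiff
    have h2 : HasFDerivAt (fun θ' => v θ' s) (∑ a, r s a • dπ s a) θ := by
      have hvs : (fun θ' => v θ' s) = fun θ' => ∑ a, π θ' s a * r s a := rfl
      rw [hvs]
      exact HasFDerivAt.fun_sum fun a _ => (hπdiff s a).mul_const (r s a)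
    exact h1.mul h2
  -- identify the derivative with the stated formula
  have hDL : D = ∑ s, η θ s • ∑ a, Q θ s a • dπ s a := by
    refine ContinuousLinearMap.ext fun h => ?_
    have hDgh : Dg h = γ • (g θ * (DP h) * g θ) := by
      rw [hDgdef]
      change -(g θ * (DM h) * g θ) = _
      simp only [ContinuousLinearMap.comp_apply, ContinuousLinearMap.neg_apply,
        ContinuousLinearMap.mulLeftRight_apply, hDMdef, ContinuousLinearMap.smul_apply,
        mul_neg, neg_mul, neg_neg, mul_smul_comm, smul_mul_assoc]
    have hCh : ∀ s₁ s₂, (DP h) s₁ s₂ = ∑ a, dπ s₁ a h * p s₁ a s₂ := by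
      intro s₁ s₂
      rw [hDPdef]
      calc (∑ s, ∑ a, (fderiv ℝ (fun θ' => π θ' s a) θ).smulRight (E s a)) h s₁ s₂
          = ∑ s, ∑ a, (if s₁ = s then dπ s a h * p s a s₂ else 0) := by
            simp only [ContinuousLinearMap.coe_sum', Finset.sum_apply, Matrix.sum_apply,
              ContinuousLinearMap.smulRight_apply, Matrix.smul_apply, hEdef, Matrix.of_apply,
              smul_eq_mul, mul_ite, mul_zero, hdπdef]
        _ = ∑ s, (if s₁ = s then ∑ a, dπ s a h * p s a s₂ else 0) := by
            refine Finset.sum_congr rfl fun s _ => ?_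
            split_ifs <;> simp
        _ = ∑ a, dπ s₁ a h * p s₁ a s₂ := by
            rw [Finset.sum_ite_eq, if_pos (Finset.mem_univ s₁)]
    have hCV : ∀ s, (DP h *ᵥ Vπ) s = ∑ a, dπ s a h * ∑ s', p s a s' * Vπ s' := by
      intro s
      show ∑ s₂, (DP h) s s₂ * Vπ s₂ = _
      calc ∑ s₂, (DP h) s s₂ * Vπ s₂
          = ∑ s₂, ∑ a, dπ s a h * p s a s₂ * Vπ s₂ := by
            refine Finset.sum_congr rfl fun s₂ _ => ?_
            rw [hCh s s₂, Finset.sum_mul]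
        _ = ∑ a, ∑ s₂, dπ s a h * p s a s₂ * Vπ s₂ := Finset.sum_comm
        _ = ∑ a, dπ s a h * ∑ s', p s a s' * Vπ s' := by
            refine Finset.sum_congr rfl fun a _ => ?_
            rw [Finset.mul_sum]
            exact Finset.sum_congr rfl fun s₂ _ => by ring
    have key : ∑ s, v θ s * (γ * (g θ * DP h * g θ) s₀ s)
        = ∑ s, g θ s₀ s * (γ * (DP h *ᵥ Vπ) s) := by
      have e1 : ∑ s, (g θ * DP h * g θ) s₀ s * v θ s = ((g θ * DP h * g θ) *ᵥ v θ) s₀ := rfl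
      have e2 : (g θ *ᵥ (DP h *ᵥ Vπ)) s₀ = ∑ s, g θ s₀ s * (DP h *ᵥ Vπ) s := rfl
      calc ∑ s, v θ s * (γ * (g θ * DP h * g θ) s₀ s)
          = γ * ∑ s, (g θ * DP h * g θ) s₀ s * v θ s := by
            rw [Finset.mul_sum]; exact Finset.sum_congr rfl fun s _ => by ring
        _ = γ * ((g θ * DP h * g θ) *ᵥ v θ) s₀ := by rw [e1]
        _ = γ * (g θ *ᵥ (DP h *ᵥ Vπ)) s₀ := by
            rw [← Matrix.mulVec_mulVec, ← Matrix.mulVec_mulVec, hUv]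
        _ = ∑ s, g θ s₀ s * (γ * (DP h *ᵥ Vπ) s) := by
            rw [e2, Finset.mul_sum]
            exact Finset.sum_congr rfl fun s _ => by ring
    -- now expand both sides
    rw [hDdef]
    simp only [ContinuousLinearMap.sum_apply, ContinuousLinearMap.add_apply,
      ContinuousLinearMap.smul_apply, ContinuousLinearMap.comp_apply, smul_eq_mul, hEv,
      hDgh, Matrix.smul_apply]
    calc ∑ s, (g θ s₀ s * (∑ a, r s a * dπ s a h) + v θ s * (γ * (g θ * DP h * g θ) s₀ s))
        = ∑ s, g θ s₀ s * (∑ a, r s a * dπ s a h) + ∑ s, v θ s * (γ * (g θ * DP h * g θ) s₀ s) :=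
          Finset.sum_add_distrib
      _ = ∑ s, g θ s₀ s * (∑ a, r s a * dπ s a h) + ∑ s, g θ s₀ s * (γ * (DP h *ᵥ Vπ) s) := by
          rw [key]
      _ = ∑ s, (g θ s₀ s * (∑ a, r s a * dπ s a h) + g θ s₀ s * (γ * (DP h *ᵥ Vπ) s)) :=
          Finset.sum_add_distrib.symm
      _ = ∑ s, η θ s * ∑ a, Q θ s a * dπ s a h := by
          refine Finset.sum_congr rfl fun s _ => ?_
          rw [hηg s, hCV s, ← mul_add]
          congr 1
          rw [Finset.mul_sum, ← Finset.sum_add_distrib]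
          refine Finset.sum_congr rfl fun a _ => ?_
          rw [hQV s a]
          ring
  rw [← hDL]
  exact hJdiff
end

section
/- (Lemma 4.2, advantage form of the policy gradient) In a finite discounted MDP with a parameterized policy whose entries π_θ(a|s) are continuously differentiable in θ ∈ ℝⁿ, let ν_θ(s) := (1−γ)·η_θ(s), where η_θ(s) := Σ_{t=0}^∞ γ^t (P_θ^t)(s₀,s), and let Adv_θ(s,a) := Q_θ(s,a) − Σ_{a'} π_θ(a'|s) Q_θ(s,a'). Then ∇_θ J(θ) = (1/(1−γ)) · Σ_{s∈S} ν_θ(s) Σ_{a∈A} ∇_θ π_θ(a|s) · Adv_θ(s,a); in particular ∇_θ J(θ) is proportional to Σ_{s} ν_θ(s) Σ_{a} ∇_θπ_θ(a|s) Adv_θ(s,a) with proportionality constant 1/(1−γ). -/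
open Matrix Finset NNReal

attribute [local instance] Matrix.linftyOpNormedRing Matrix.linftyOpNormedAlgebra

section Aux

variable {S : Type*} [Fintype S] [DecidableEq S] [Nonempty S]

/-- Entry evaluation as a continuous linear map on matrices. -/
noncomputable def entryCLM (i j : S) : Matrix S S ℝ →L[ℝ] ℝ :=
  LinearMap.toContinuousLinearMap
    { toFun := fun A => A i j
      map_add' := fun _ _ => rfl
      map_smul' := fun _ _ => rfl }

@[simp] lemma entryCLM_apply (i j : S) (A : Matrix S S ℝ) : entryCLM i j A = A i j := rfl

lemma stoch_norm_le_one (A : Matrix S S ℝ) (h0 : ∀ i j, 0 ≤ A i j)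
    (h1 : ∀ i, ∑ j, A i j = 1) : ‖A‖ ≤ 1 := by
  rw [Matrix.linfty_opNorm_def]
  have h : ∀ i ∈ Finset.univ, (∑ j, ‖A i j‖₊) ≤ (1 : ℝ≥0) := by
    intro i _
    rw [← NNReal.coe_le_coe]
    push_cast
    refine le_of_eq ?_
    calc (∑ j, (‖A i j‖₊ : ℝ)) = ∑ j, A i j := by
          refine Finset.sum_congr rfl fun j _ => ?_
          rw [coe_nnnorm, Real.norm_of_nonneg (h0 i j)]
      _ = 1 := h1 i
  exact_mod_cast Finset.sup_le h

end Aux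

set_option maxHeartbeats 1000000 in
/-- Lemma 4.2, advantage form of the policy gradient:
With `ν_θ(s) = (1-γ) η_θ(s)` and `Adv_θ(s,a) = Q_θ(s,a) - Σ_{a'} π_θ(a'|s) Q_θ(s,a')`,
`∇_θ J(θ) = (1/(1-γ)) Σ_s ν_θ(s) Σ_a ∇_θ π_θ(a|s) · Adv_θ(s,a)`. -/
theorem policy_gradient_advantage_form
    {S A : Type*} [Fintype S] [DecidableEq S] [Nonempty S] [Fintype A] [Nonempty A]
    {n : ℕ}
    (p : S → A → S → ℝ) (hp0 : ∀ s a s', 0 ≤ p s a s') (hp1 : ∀ s a, ∑ s', p s a s' = 1)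
    (r : S → A → ℝ) (γ : ℝ) (hγ : γ ∈ Set.Ioo (0 : ℝ) 1) (s₀ : S)
    (π : (Fin n → ℝ) → S → A → ℝ)
    (hπ0 : ∀ θ s a, 0 ≤ π θ s a) (hπ1 : ∀ θ s, ∑ a, π θ s a = 1)
    (hπC : ∀ s a, ContDiff ℝ 1 (fun θ => π θ s a))
    (Pmat : (Fin n → ℝ) → Matrix S S ℝ)
    (hPmat : ∀ θ s s', Pmat θ s s' = ∑ a, π θ s a * p s a s')
    (Q : (Fin n → ℝ) → S → A → ℝ)
    (hQ : ∀ θ s a, Q θ s a = r s a + γ * ∑ s', p s a s' * ∑ a', π θ s' a' * Q θ s' a')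
    (J : (Fin n → ℝ) → ℝ)
    (hJ : ∀ θ, J θ = ∑' t : ℕ, γ ^ t * ∑ s, ((Pmat θ) ^ t) s₀ s * ∑ a, π θ s a * r s a)
    (η : (Fin n → ℝ) → S → ℝ)
    (hη : ∀ θ s, η θ s = ∑' t : ℕ, γ ^ t * ((Pmat θ) ^ t) s₀ s)
    (ν : (Fin n → ℝ) → S → ℝ) (hν : ∀ θ s, ν θ s = (1 - γ) * η θ s)
    (Adv : (Fin n → ℝ) → S → A → ℝ)
    (hAdv : ∀ θ s a, Adv θ s a = Q θ s a - ∑ a', π θ s a' * Q θ s a')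
    (θ : Fin n → ℝ) :
    HasFDerivAt J
      ((1 / (1 - γ)) •
        ∑ s, ν θ s • ∑ a, Adv θ s a • fderiv ℝ (fun θ' => π θ' s a) θ) θ := by
  obtain ⟨hγ0, hγ1⟩ := hγ
  have hγne : (1 : ℝ) - γ ≠ 0 := by linarith
  -- row-stochasticity of Pmat
  have hP0 : ∀ θ' s s', 0 ≤ Pmat θ' s s' := fun θ' s s' => by
    rw [hPmat]; exact Finset.sum_nonneg fun a _ => mul_nonneg (hπ0 _ _ _) (hp0 _ _ _)
  have hProw : ∀ θ' s, ∑ s', Pmat θ' s s' = 1 := fun θ' s => by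
    simp_rw [hPmat]
    rw [Finset.sum_comm]
    simp_rw [← Finset.mul_sum, hp1, mul_one]
    exact hπ1 θ' s
  have hPle : ∀ θ', ‖γ • Pmat θ'‖ < 1 := fun θ' => by
    rw [norm_smul, Real.norm_of_nonneg hγ0.le]
    calc γ * ‖Pmat θ'‖ ≤ γ * 1 :=
          mul_le_mul_of_nonneg_left (stoch_norm_le_one _ (hP0 θ') (hProw θ')) hγ0.le
      _ < 1 := by linarith
  set B : (Fin n → ℝ) → Matrix S S ℝ := fun θ' => Ring.inverse (1 - γ • Pmat θ') with hBdef
  have hBsum : ∀ θ', HasSum (fun t : ℕ => (γ • Pmat θ') ^ t) (B θ') :=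
    fun θ' => hasSum_geom_series_inverse _ (hPle θ')
  have hUnit : ∀ θ', IsUnit ((1 : Matrix S S ℝ) - γ • Pmat θ') :=
    fun θ' => isUnit_one_sub_of_norm_lt_one (hPle θ')
  -- entrywise geometric series
  have hentry : ∀ θ' s s', HasSum (fun t : ℕ => γ ^ t * ((Pmat θ') ^ t) s s') (B θ' s s') := by
    intro θ' s s'
    have h := (entryCLM s s').hasSum (hBsum θ')
    have he : ∀ t : ℕ, entryCLM s s' ((γ • Pmat θ') ^ t) = γ ^ t * ((Pmat θ') ^ t) s s' := by
      intro t
      rw [smul_pow]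
      simp [Matrix.smul_apply, smul_eq_mul]
    simp only [he] at h; exact h
  have hη' : ∀ θ' s, η θ' s = B θ' s₀ s := fun θ' s => by
    rw [hη]; exact (hentry θ' s₀ s).tsum_eq
  -- J in closed form
  have hJB : ∀ θ', J θ' = ∑ s, B θ' s₀ s * ∑ a, π θ' s a * r s a := by
    intro θ'
    rw [hJ]
    have h1 : (fun t : ℕ => γ ^ t * ∑ s, ((Pmat θ') ^ t) s₀ s * ∑ a, π θ' s a * r s a)
        = fun t : ℕ => ∑ s, γ ^ t * ((Pmat θ') ^ t) s₀ s * (∑ a, π θ' s a * r s a) := by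
      funext t; rw [Finset.mul_sum]; exact Finset.sum_congr rfl fun s _ => by ring
    rw [h1, Summable.tsum_finsetSum (fun s _ => ((hentry θ' s₀ s).summable.mul_right _))]
    exact Finset.sum_congr rfl fun s _ => ((hentry θ' s₀ s).mul_right _).tsum_eq
  -- value function identity: (B θ) applied to one-step rewards gives ∑ π Q
  have hMw : ((1 - γ • Pmat θ) *ᵥ fun s' => ∑ a', π θ s' a' * Q θ s' a')
      = fun s => ∑ a, π θ s a * r s a := by
    funext s
    have e1 : ∑ s', Pmat θ s s' * ∑ a', π θ s' a' * Q θ s' a'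
        = ∑ a, π θ s a * ∑ s', p s a s' * ∑ a', π θ s' a' * Q θ s' a' := by
      simp_rw [hPmat, Finset.sum_mul]
      rw [Finset.sum_comm]
      exact Finset.sum_congr rfl fun a _ => by
        rw [Finset.mul_sum]; exact Finset.sum_congr rfl fun s' _ => by ring
    have e2 : ∑ a, π θ s a * Q θ s a = (∑ a, π θ s a * r s a)
        + γ * ∑ s', Pmat θ s s' * ∑ a', π θ s' a' * Q θ s' a' := by
      rw [e1]
      calc ∑ a, π θ s a * Q θ s a
          = ∑ a, (π θ s a * r s a
            + γ * (π θ s a * ∑ s', p s a s' * ∑ a', π θ s' a' * Q θ s' a')) := by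
            refine Finset.sum_congr rfl fun a _ => ?_
            rw [hQ θ s a]; ring
        _ = _ := by rw [Finset.sum_add_distrib, ← Finset.mul_sum]
    have e3 : (((1 - γ • Pmat θ) *ᵥ fun s' => ∑ a', π θ s' a' * Q θ s' a') s)
        = (∑ a, π θ s a * Q θ s a) - γ * ∑ s', Pmat θ s s' * ∑ a', π θ s' a' * Q θ s' a' := by
      simp only [Matrix.mulVec, dotProduct, Matrix.sub_apply, Matrix.one_apply,
        Matrix.smul_apply, smul_eq_mul, sub_mul, Finset.sum_sub_distrib, ite_mul, one_mul,
        zero_mul, Finset.sum_ite_eq, Finset.mem_univ, if_true]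
      rw [Finset.mul_sum]
      exact congrArg _ (Finset.sum_congr rfl fun s' _ => by ring)
    rw [e3, e2]; ring
  have hVal : ∀ s, ∑ s', B θ s s' * (∑ a, π θ s' a * r s' a) = ∑ a', π θ s a' * Q θ s a' := by
    intro s
    have h2 : B θ *ᵥ ((1 - γ • Pmat θ) *ᵥ fun s' => ∑ a', π θ s' a' * Q θ s' a')
        = fun s' => ∑ a', π θ s' a' * Q θ s' a' := by
      rw [Matrix.mulVec_mulVec, Ring.inverse_mul_cancel _ (hUnit θ), Matrix.one_mulVec]
    rw [hMw] at h2
    calc ∑ s', B θ s s' * (∑ a, π θ s' a * r s' a)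
        = (B θ *ᵥ fun s' => ∑ a, π θ s' a * r s' a) s := by
          simp [Matrix.mulVec, dotProduct]
      _ = ∑ a', π θ s a' * Q θ s a' := by rw [h2]
  -- derivatives of the policy
  set D : S → A → (Fin n → ℝ) →L[ℝ] ℝ := fun s a => fderiv ℝ (fun θ' => π θ' s a) θ with hDdef
  have hD : ∀ s a, HasFDerivAt (fun θ' => π θ' s a) (D s a) θ := fun s a =>
    ((hπC s a).differentiable one_ne_zero θ).hasFDerivAt
  have hDzero : ∀ s, (∑ a, D s a) = 0 := by
    intro s
    have h1 : HasFDerivAt (fun θ' => ∑ a, π θ' s a) (∑ a, D s a) θ :=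
      HasFDerivAt.fun_sum fun a _ => hD s a
    have heq : (fun θ' => ∑ a, π θ' s a) = fun _ => (1 : ℝ) := funext fun θ' => hπ1 θ' s
    rw [heq] at h1
    exact h1.unique (hasFDerivAt_const _ _)
  -- the identity continuous linear equivalence between pi type and matrices
  let e : (S → S → ℝ) ≃L[ℝ] Matrix S S ℝ :=
    LinearEquiv.toContinuousLinearEquiv
      (LinearEquiv.refl ℝ (S → S → ℝ) : (S → S → ℝ) ≃ₗ[ℝ] Matrix S S ℝ)
  have hee : ∀ x : S → S → ℝ, e x = x := fun _ => rfl
  -- derivative of θ' ↦ 1 - γ • Pmat θ'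
  set LMpi : (Fin n → ℝ) →L[ℝ] (S → S → ℝ) :=
    ContinuousLinearMap.pi fun s => ContinuousLinearMap.pi fun s' =>
      -(γ • ∑ a, p s a s' • D s a) with hLMpidef
  have hFpi : HasFDerivAt
      (fun θ' (s : S) (s' : S) => (if s = s' then (1 : ℝ) else 0) - γ * ∑ a, π θ' s a * p s a s')
      LMpi θ := by
    refine hasFDerivAt_pi.mpr fun s => hasFDerivAt_pi.mpr fun s' => ?_
    have h1 : HasFDerivAt (fun θ' => ∑ a, π θ' s a * p s a s') (∑ a, p s a s' • D s a) θ :=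
      HasFDerivAt.fun_sum fun a _ => (hD s a).mul_const _
    simpa using (hasFDerivAt_const (if s = s' then (1 : ℝ) else 0) θ).fun_sub (h1.const_mul γ)
  have hMder : HasFDerivAt (fun θ' => (1 : Matrix S S ℝ) - γ • Pmat θ')
      ((e.toContinuousLinearMap).comp LMpi) θ := by
    have hcomp := (e.toContinuousLinearMap.hasFDerivAt
      (x := fun s s' => (if s = s' then (1 : ℝ) else 0) - γ * ∑ a, π θ s a * p s a s')).comp θ hFpi
    have hfun : ((e : (S → S → ℝ) → Matrix S S ℝ) ∘
        (fun θ' (s : S) (s' : S) =>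
          (if s = s' then (1 : ℝ) else 0) - γ * ∑ a, π θ' s a * p s a s'))
        = fun θ' => (1 : Matrix S S ℝ) - γ • Pmat θ' := by
      funext θ'
      simp only [Function.comp_apply, hee]
      funext s s'
      simp [Matrix.sub_apply, Matrix.one_apply, Matrix.smul_apply, smul_eq_mul, hPmat]
    rw [← hfun]
    exact hcomp
  -- derivative of B
  have hBder : HasFDerivAt B
      ((-(ContinuousLinearMap.mulLeftRight ℝ (Matrix S S ℝ) (B θ) (B θ))).comp
        ((e.toContinuousLinearMap).comp LMpi)) θ := by
    have hu := hasFDerivAt_ringInverse (𝕜 := ℝ) (hUnit θ).unit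
    have h1 : (((hUnit θ).unit⁻¹ : (Matrix S S ℝ)ˣ) : Matrix S S ℝ) = B θ := by
      rw [← Ring.inverse_unit ((hUnit θ).unit), IsUnit.unit_spec]
    rw [h1, IsUnit.unit_spec] at hu
    exact hu.comp θ hMder
  -- derivative of J in closed form
  have hJder : HasFDerivAt (fun θ' => ∑ s, B θ' s₀ s * ∑ a, π θ' s a * r s a)
      (∑ s, ((B θ s₀ s) • (∑ a, r s a • D s a)
        + (∑ a, π θ s a * r s a) • ((entryCLM s₀ s).comp
            ((-(ContinuousLinearMap.mulLeftRight ℝ (Matrix S S ℝ) (B θ) (B θ))).comp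
              ((e.toContinuousLinearMap).comp LMpi))))) θ := by
    refine HasFDerivAt.fun_sum fun s _ => ?_
    have hg : HasFDerivAt (fun θ' => B θ' s₀ s)
        ((entryCLM s₀ s).comp
          ((-(ContinuousLinearMap.mulLeftRight ℝ (Matrix S S ℝ) (B θ) (B θ))).comp
            ((e.toContinuousLinearMap).comp LMpi))) θ :=
      ((entryCLM s₀ s).hasFDerivAt).comp θ hBder
    have hρ : HasFDerivAt (fun θ' => ∑ a, π θ' s a * r s a) (∑ a, r s a • D s a) θ :=
      HasFDerivAt.fun_sum fun a _ => (hD s a).mul_const _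
    exact hg.mul hρ
  -- explicit entry of the applied derivative of B
  have hNu : ∀ u : Fin n → ℝ, (((e.toContinuousLinearMap).comp LMpi) u)
      = fun s1 s2 => -(γ * ∑ a, p s1 a s2 * (D s1 a u)) := by
    intro u
    rw [ContinuousLinearMap.comp_apply]
    have h1 : (e.toContinuousLinearMap) (LMpi u) = LMpi u := rfl
    rw [h1, hLMpidef]
    funext s1 s2
    simp [ContinuousLinearMap.pi_apply, ContinuousLinearMap.neg_apply,
      ContinuousLinearMap.smul_apply, ContinuousLinearMap.sum_apply, smul_eq_mul]
  have hC2 : ∀ (u : Fin n → ℝ) (s : S),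
      entryCLM s₀ s (((-(ContinuousLinearMap.mulLeftRight ℝ (Matrix S S ℝ) (B θ) (B θ))).comp
        ((e.toContinuousLinearMap).comp LMpi)) u)
      = γ * ∑ s1, B θ s₀ s1 * ∑ s2, (∑ a, (D s1 a u) * p s1 a s2) * B θ s2 s := by
    intro u s
    change entryCLM s₀ s ((-(ContinuousLinearMap.mulLeftRight ℝ (Matrix S S ℝ) (B θ) (B θ)))
      (((e.toContinuousLinearMap).comp LMpi) u)) = _
    rw [ContinuousLinearMap.neg_apply,
      ContinuousLinearMap.mulLeftRight_apply, entryCLM_apply]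
    simp only [Matrix.neg_apply, Matrix.mul_apply]
    simp only [hNu u, Matrix.neg_apply, Matrix.mul_apply, neg_mul, mul_neg, neg_neg,
      Finset.sum_neg_distrib, Finset.sum_mul, Finset.mul_sum]
    rw [Finset.sum_comm]
    exact Finset.sum_congr rfl fun s1 _ => Finset.sum_congr rfl fun s2 _ =>
      Finset.sum_congr rfl fun a _ => by ring
  -- the big rearrangement
  have hT : ∀ u : Fin n → ℝ,
      ∑ s, (∑ a, π θ s a * r s a) *
        (γ * ∑ s1, B θ s₀ s1 * ∑ s2, (∑ a, (D s1 a u) * p s1 a s2) * B θ s2 s)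
      = ∑ s1, B θ s₀ s1 * ∑ a, (D s1 a u) *
          (γ * ∑ s2, p s1 a s2 * (∑ a', π θ s2 a' * Q θ s2 a')) := by
    intro u
    calc ∑ s, (∑ a, π θ s a * r s a) *
          (γ * ∑ s1, B θ s₀ s1 * ∑ s2, (∑ a, (D s1 a u) * p s1 a s2) * B θ s2 s)
        = ∑ s, ∑ s1, ∑ a, ∑ s2, γ * B θ s₀ s1 * (D s1 a u) * p s1 a s2 * B θ s2 s *
            (∑ a', π θ s a' * r s a') := by
          refine Finset.sum_congr rfl fun s _ => ?_
          generalize (∑ a, π θ s a * r s a) = x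
          simp only [Finset.mul_sum, Finset.sum_mul]
          refine Finset.sum_congr rfl fun s1 _ => ?_
          rw [Finset.sum_comm]
          exact Finset.sum_congr rfl fun a _ => Finset.sum_congr rfl fun s2 _ => by ring
      _ = ∑ s1, ∑ a, ∑ s2, ∑ s, γ * B θ s₀ s1 * (D s1 a u) * p s1 a s2 * B θ s2 s *
            (∑ a', π θ s a' * r s a') := by
          rw [Finset.sum_comm]
          refine Finset.sum_congr rfl fun s1 _ => ?_
          rw [Finset.sum_comm]
          refine Finset.sum_congr rfl fun a _ => ?_
          rw [Finset.sum_comm]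
      _ = ∑ s1, B θ s₀ s1 * ∑ a, (D s1 a u) *
            (γ * ∑ s2, p s1 a s2 * (∑ s, B θ s2 s * ∑ a', π θ s a' * r s a')) := by
          simp only [Finset.mul_sum]
          exact Finset.sum_congr rfl fun s1 _ => Finset.sum_congr rfl fun a _ =>
            Finset.sum_congr rfl fun s2 _ => Finset.sum_congr rfl fun s _ =>
              Finset.sum_congr rfl fun a' _ => by ring
      _ = ∑ s1, B θ s₀ s1 * ∑ a, (D s1 a u) *
            (γ * ∑ s2, p s1 a s2 * (∑ a', π θ s2 a' * Q θ s2 a')) := by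
          simp only [hVal]
  -- identify the two continuous linear maps
  have hgoal : ((1 / (1 - γ)) • ∑ s, ν θ s • ∑ a, Adv θ s a • D s a)
      = (∑ s, ((B θ s₀ s) • (∑ a, r s a • D s a)
        + (∑ a, π θ s a * r s a) • ((entryCLM s₀ s).comp
            ((-(ContinuousLinearMap.mulLeftRight ℝ (Matrix S S ℝ) (B θ) (B θ))).comp
              ((e.toContinuousLinearMap).comp LMpi))))) := by
    refine ContinuousLinearMap.ext fun u => ?_
    have h0 : ∀ s : S, ∑ a, (D s a) u = 0 := fun s => by
      rw [← ContinuousLinearMap.sum_apply, hDzero s, ContinuousLinearMap.zero_apply]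
    simp only [ContinuousLinearMap.smul_apply, ContinuousLinearMap.sum_apply,
      ContinuousLinearMap.add_apply, smul_eq_mul, hC2]
    calc (1 / (1 - γ)) * ∑ s, ν θ s * ∑ a, Adv θ s a * ((D s a) u)
        = ∑ s, B θ s₀ s * ∑ a, ((D s a) u) * Q θ s a := by
          rw [Finset.mul_sum]
          refine Finset.sum_congr rfl fun s _ => ?_
          rw [hν, hη']
          have hAd : ∑ a, Adv θ s a * ((D s a) u)
              = ∑ a, ((D s a) u) * Q θ s a
                - (∑ a', π θ s a' * Q θ s a') * ∑ a, ((D s a) u) := by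
            rw [Finset.mul_sum, ← Finset.sum_sub_distrib]
            exact Finset.sum_congr rfl fun a _ => by rw [hAdv]; ring
          rw [hAd, h0 s, mul_zero, sub_zero]
          field_simp
      _ = ∑ s, (B θ s₀ s * ∑ a, r s a * ((D s a) u)
            + B θ s₀ s * ∑ a, ((D s a) u) *
                (γ * ∑ s2, p s a s2 * (∑ a', π θ s2 a' * Q θ s2 a'))) := by
          refine Finset.sum_congr rfl fun s _ => ?_
          rw [← mul_add, ← Finset.sum_add_distrib]
          exact congrArg _ (Finset.sum_congr rfl fun a _ => by rw [hQ θ s a]; ring)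
      _ = (∑ s, B θ s₀ s * ∑ a, r s a * ((D s a) u))
            + ∑ s, (∑ a, π θ s a * r s a) *
              (γ * ∑ s1, B θ s₀ s1 * ∑ s2, (∑ a, ((D s1 a) u) * p s1 a s2) * B θ s2 s) := by
          rw [Finset.sum_add_distrib, ← hT u]
      _ = ∑ s, (B θ s₀ s * ∑ a, r s a * ((D s a) u)
            + (∑ a, π θ s a * r s a) *
              (γ * ∑ s1, B θ s₀ s1 * ∑ s2, (∑ a, ((D s1 a) u) * p s1 a s2) * B θ s2 s)) :=
          (Finset.sum_add_distrib).symm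
      _ = ∑ s, (B θ s₀ s * ∑ a, r s a * ((D s a) u)
            + (∑ a, π θ s a * r s a) *
              (((entryCLM s₀ s).comp
                ((-(ContinuousLinearMap.mulLeftRight ℝ (Matrix S S ℝ) (B θ) (B θ))).comp
                  ((e.toContinuousLinearMap).comp LMpi))) u)) := by
          refine Finset.sum_congr rfl fun s _ => ?_
          rw [← hC2 u s]; rfl
  rw [funext hJB]
  simp only [hDdef] at hgoal hJder
  rw [hgoal]
  exact hJder
end

section
/- Let E be a real inner product space, g, d ∈ E with d ≠ 0, and set e := d − g. Then ⟨g, d⟩ / ‖d‖ ≥ (1/3)·‖g‖ − (8/3)·‖e‖. -/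
open scoped RealInnerProductSpace

/-- In a real inner product space, for `d ≠ 0` and `e = d - g`,
`⟨g, d⟫ / ‖d‖ ≥ (1/3)‖g‖ - (8/3)‖e‖`. -/
theorem inner_div_norm_lower_bound
    {E : Type*} [NormedAddCommGroup E] [InnerProductSpace ℝ E]
    (g d : E) (hd : d ≠ 0) (e : E) (he : e = d - g) :
    ⟪g, d⟫ / ‖d‖ ≥ (1 / 3) * ‖g‖ - (8 / 3) * ‖e‖ := by
  have hg : g = d - e := by rw [he]; abel
  have hdpos : (0:ℝ) < ‖d‖ := norm_pos_iff.mpr hd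
  have h1 : ⟪g, d⟫ ≥ ‖d‖^2 - ‖e‖ * ‖d‖ := by
    rw [hg, inner_sub_left, real_inner_self_eq_norm_sq]
    have := abs_real_inner_le_norm e d
    have := abs_le.mp this
    linarith [this.2]
  have h2 : ‖g‖ ≤ ‖d‖ + ‖e‖ := by
    rw [hg]; exact norm_sub_le d e
  rw [ge_iff_le, le_div_iff₀ hdpos]
  nlinarith [norm_nonneg e, norm_nonneg g, norm_nonneg d]
end

section
/- Let E be a real inner product space, J : E → ℝ, G : E → E, and L > 0 such that the descent inequality J(y) ≥ J(x) + ⟨G(x), y − x⟩ − L·‖y − x‖² holds for all x, y ∈ E. Suppose additionally there are μ > 0, ε' ≥ 0, and J* ∈ ℝ such that √μ·(J* − J(x)) ≤ ε' + ‖G(x)‖ for all x ∈ E. Then for any θ ∈ E, any α > 0, and any d ∈ E with d ≠ 0, the point θ' := θ + α·d/‖d‖ satisfies J* − J(θ') ≤ (1 − α√μ/3)·(J* − J(θ)) + (8α/3)·‖d − G(θ)‖ + L·α² + (α/3)·ε'. -/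
open scoped RealInnerProductSpace

/-- one-step progress of normalized ascent. If `J` satisfies the
descent inequality `J(y) ≥ J(x) + ⟨G(x), y - x⟩ - L‖y - x‖²` and the gradient
domination condition `√μ (J* - J(x)) ≤ ε' + ‖G(x)‖`, then for any `θ`, `α > 0`
and `d ≠ 0`, the point `θ' = θ + α d/‖d‖` satisfies
`J* - J(θ') ≤ (1 - α√μ/3)(J* - J(θ)) + (8α/3)‖d - G(θ)‖ + Lα² + (α/3)ε'`. -/
theorem normalized_ascent_one_step_progress
    {E : Type*} [NormedAddCommGroup E] [InnerProductSpace ℝ E]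
    (J : E → ℝ) (G : E → E) (L : ℝ) (hL : 0 < L)
    (hdesc : ∀ x y : E, J y ≥ J x + ⟪G x, y - x⟫ - L * ‖y - x‖ ^ 2)
    (μ : ℝ) (hμ : 0 < μ) (ε' : ℝ) (hε' : 0 ≤ ε') (Jstar : ℝ)
    (hdom : ∀ x : E, Real.sqrt μ * (Jstar - J x) ≤ ε' + ‖G x‖)
    (θ : E) (α : ℝ) (hα : 0 < α) (d : E) (hd : d ≠ 0) :
    Jstar - J (θ + (α / ‖d‖) • d) ≤
      (1 - α * Real.sqrt μ / 3) * (Jstar - J θ) +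
        (8 * α / 3) * ‖d - G θ‖ + L * α ^ 2 + (α / 3) * ε' := by
  have hr : (0:ℝ) < ‖d‖ := norm_pos_iff.mpr hd
  have h1 := hdesc θ (θ + (α / ‖d‖) • d)
  have hsub : (θ + (α / ‖d‖) • d) - θ = (α / ‖d‖) • d := by abel
  rw [hsub] at h1
  have hnorm : ‖(α / ‖d‖) • d‖ = α := by
    rw [norm_smul, Real.norm_eq_abs, abs_of_pos (div_pos hα hr),
      div_mul_cancel₀ _ hr.ne']
  rw [hnorm, real_inner_smul_right] at h1
  -- inner product bound
  have h2 : ⟪G θ, d⟫ = ‖d‖ ^ 2 - ⟪d - G θ, d⟫ := by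
    rw [inner_sub_left, real_inner_self_eq_norm_sq]; ring
  have h3 : ⟪d - G θ, d⟫ ≤ ‖d - G θ‖ * ‖d‖ := real_inner_le_norm _ _
  have hp : α * (‖d‖ - ‖d - G θ‖) ≤ (α / ‖d‖) * ⟪G θ, d⟫ := by
    rw [div_mul_eq_mul_div, le_div_iff₀ hr]
    nlinarith [hα.le, hr.le]
  have h4 : ‖G θ‖ ≤ ‖d‖ + ‖d - G θ‖ := by
    have h := norm_sub_le d (d - G θ)
    rwa [sub_sub_cancel] at h
  have h5 := hdom θ
  have hax : α * (Real.sqrt μ * (Jstar - J θ)) ≤ α * (ε' + ‖d‖ + ‖d - G θ‖) := by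
    apply mul_le_mul_of_nonneg_left _ hα.le
    linarith
  have hs : 0 ≤ ‖d - G θ‖ := norm_nonneg _
  nlinarith [mul_pos hα hr, mul_nonneg hα.le hs]
end

section
/- Let T ≥ 3 be an integer, and let Δ : ℕ → ℝ and c : ℕ → ℝ be sequences with Δ_t ≥ 0 and c_t ≥ 0 for all t. If Δ_{t+1} ≤ (1 − 7/(6t))·Δ_t + c_t/t for every integer t with 2 ≤ t ≤ T−1, then Δ_T ≤ (Δ_2 + Σ_{τ=2}^{T−1} c_τ) / (T−1). -/
/-- If `Δ` and `c` are nonnegative sequences with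
`Δ_{t+1} ≤ (1 - 7/(6t)) Δ_t + c_t / t` for all integers `2 ≤ t ≤ T-1` (`T ≥ 3`),
then `Δ_T ≤ (Δ_2 + Σ_{τ=2}^{T-1} c_τ) / (T-1)`. -/
theorem recursion_convergence_bound
    (T : ℕ) (hT : 3 ≤ T) (Δ c : ℕ → ℝ)
    (hΔ0 : ∀ t, 0 ≤ Δ t) (hc0 : ∀ t, 0 ≤ c t)
    (hrec : ∀ t : ℕ, 2 ≤ t → t ≤ T - 1 →
      Δ (t + 1) ≤ (1 - 7 / (6 * (t : ℝ))) * Δ t + c t / (t : ℝ)) :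
    Δ T ≤ (Δ 2 + ∑ τ ∈ Finset.Icc 2 (T - 1), c τ) / ((T : ℝ) - 1) := by
  have key : ∀ t : ℕ, 3 ≤ t → t ≤ T →
      Δ t ≤ (Δ 2 + ∑ τ ∈ Finset.Icc 2 (t - 1), c τ) / ((t : ℝ) - 1) := by
    intro t ht3
    induction t, ht3 using Nat.le_induction with
    | base =>
      intro hle
      have h1 := hrec 2 (by omega) (by omega)
      norm_num at h1 ⊢
      nlinarith [hΔ0 2, hc0 2]
    | succ t ht3 ih =>
      intro hle
      have ihh := ih (by omega)
      have h1 := hrec t (by omega) (by omega)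
      have ht0 : (0:ℝ) < t := by positivity
      have ht3' : (3:ℝ) ≤ t := by exact_mod_cast ht3
      have ht1 : (0:ℝ) < (t:ℝ) - 1 := by linarith
      set S : ℝ := Δ 2 + ∑ τ ∈ Finset.Icc 2 (t - 1), c τ with hS
      have hsum : ∑ τ ∈ Finset.Icc 2 (t + 1 - 1), c τ
          = (∑ τ ∈ Finset.Icc 2 (t - 1), c τ) + c t := by
        have h : t + 1 - 1 = (t - 1) + 1 := by omega
        have h2 : t - 1 + 1 = t := by omega
        rw [h, Finset.sum_Icc_succ_top (by omega), h2]
      have hS0 : 0 ≤ S := by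
        have : 0 ≤ ∑ τ ∈ Finset.Icc 2 (t - 1), c τ :=
          Finset.sum_nonneg fun i _ => hc0 i
        have := hΔ0 2
        linarith
      have IH' : Δ t * ((t:ℝ) - 1) ≤ S := (le_div_iff₀ ht1).mp ihh
      rw [hsum]
      have hcast : ((t + 1 : ℕ) : ℝ) - 1 = (t : ℝ) := by push_cast; ring
      rw [hcast, le_div_iff₀ ht0]
      have hinv : 7 / (6 * (t:ℝ)) * (t:ℝ) = 7 / 6 := by field_simp
      have hcdiv : c t / (t:ℝ) * (t:ℝ) = c t := by field_simp
      have h2 := mul_le_mul_of_nonneg_right h1 ht0.le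
      nlinarith [hΔ0 t, hc0 t]
  have := key T hT le_rfl
  exact this
end

section
/- For every integer t ≥ 2, ∏_{k=2}^{t} (1 − 7/(6k)) ≤ 1/t. -/
/-- For every integer `t ≥ 2`, `∏_{k=2}^{t} (1 - 7/(6k)) ≤ 1/t`. -/
theorem prod_one_sub_seven_div_six_le
    (t : ℕ) (ht : 2 ≤ t) :
    ∏ k ∈ Finset.Icc 2 t, (1 - 7 / (6 * (k : ℝ))) ≤ 1 / (t : ℝ) := by
  induction t, ht using Nat.le_induction with
  | base => norm_num
  | succ n hn ih =>
    rw [Finset.prod_Icc_succ_top (by omega : 2 ≤ n + 1)]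
    have hn' : (1 : ℝ) ≤ (n : ℝ) := by exact_mod_cast Nat.one_le_of_lt hn
    have hpos : (0 : ℝ) < (n : ℝ) := by linarith
    have hpos1 : (0 : ℝ) < (n : ℝ) + 1 := by linarith
    have hf : (0 : ℝ) ≤ 1 - 7 / (6 * ((n + 1 : ℕ) : ℝ)) := by
      push_cast
      rw [sub_nonneg, div_le_one (by positivity)]
      linarith
    calc (∏ k ∈ Finset.Icc 2 n, (1 - 7 / (6 * (k : ℝ)))) * (1 - 7 / (6 * ((n + 1 : ℕ) : ℝ)))
        ≤ (1 / (n : ℝ)) * (1 - 7 / (6 * ((n + 1 : ℕ) : ℝ))) :=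
          mul_le_mul_of_nonneg_right ih hf
      _ ≤ 1 / ((n + 1 : ℕ) : ℝ) := by
          push_cast
          rw [div_mul_eq_mul_div, div_le_div_iff₀ hpos (by linarith)]
          have key : (1 - 7 / (6 * ((n : ℝ) + 1))) * ((n : ℝ) + 1) = (n : ℝ) + 1 - 7 / 6 := by
            field_simp
          nlinarith [key]
end
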